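/- Let G be a bipartite graph with bipartition V(G) = V_1 ∪ V_2 and exactly k positive adjacency eigenvalues. Let G' be obtained from G by joining each vertex of V_1 to r new vertices of degree 1 (pendant vertices). Then λ_i(G')^2 = λ_i(G)^2 + r for i = 1, ..., k, where λ_i denotes the i-th largest eigenvalue. -/

import Mathlib

open scoped Classical

open Polynomial Matrix

/-! ### Auxiliary lemmas about sorted multisets -/

noncomputable def nthD (s : Multiset ℝ) (i : ℕ) : ℝ := ((s.sort (· ≤ ·)).reverse).getD i 0

lemma sort_unique (s : Multiset ℝ) (l : List ℝ) (hl : l.Pairwise (· ≤ ·))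
    (hp : (l : Multiset ℝ) = s) : s.sort (· ≤ ·) = l :=
  List.Perm.eq_of_pairwise' (Multiset.pairwise_sort s _) hl
    (Multiset.coe_eq_coe.mp (by rw [Multiset.sort_eq, hp]))

lemma sort_add (s t : Multiset ℝ) (h : ∀ a ∈ s, ∀ b ∈ t, a ≤ b) :
    (s + t).sort (· ≤ ·) = s.sort (· ≤ ·) ++ t.sort (· ≤ ·) := by
  apply sort_unique
  · rw [List.pairwise_append]
    exact ⟨Multiset.pairwise_sort s _, Multiset.pairwise_sort t _,
      fun a ha b hb => h a (by simpa using (Multiset.mem_sort (α := ℝ) (· ≤ ·)).mp ha) b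
        (by simpa using (Multiset.mem_sort (α := ℝ) (· ≤ ·)).mp hb)⟩
  · rw [← Multiset.coe_add, Multiset.sort_eq, Multiset.sort_eq]

lemma nthD_add_of (pos rest : Multiset ℝ) (h : ∀ a ∈ rest, ∀ b ∈ pos, a ≤ b) (i : ℕ)
    (hi : i < Multiset.card pos) : nthD (pos + rest) i = nthD pos i := by
  rw [nthD, add_comm, sort_add rest pos h, List.reverse_append, List.getD_append]
  · rfl
  · simpa using hi

lemma nthD_map_mono (f : ℝ → ℝ) (hf : Monotone f) (s : Multiset ℝ) (i : ℕ)
    (hi : i < Multiset.card s) : nthD (s.map f) i = f (nthD s i) := by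
  have hs : (s.map f).sort (· ≤ ·) = (s.sort (· ≤ ·)).map f := by
    apply sort_unique
    · exact List.Pairwise.map f (fun a b hab => hf hab) (Multiset.pairwise_sort s _)
    · rw [← Multiset.map_coe, Multiset.sort_eq]
  have hlen : i < ((s.sort (· ≤ ·)).reverse).length := by simpa using hi
  rw [nthD, nthD, hs, ← List.map_reverse, List.getD_eq_getElem _ _ (by simpa using hlen),
    List.getD_eq_getElem _ _ hlen, List.getElem_map]

lemma nthD_mem (s : Multiset ℝ) (i : ℕ) (hi : i < Multiset.card s) : nthD s i ∈ s := by
  have hlen : i < ((s.sort (· ≤ ·)).reverse).length := by simpa using hi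
  rw [nthD, List.getD_eq_getElem _ _ hlen]
  have := List.getElem_mem hlen
  rw [List.mem_reverse] at this
  exact (Multiset.mem_sort _).mp this

/-! ### Auxiliary lemmas about characteristic polynomials -/

lemma eval_charpoly' {n : Type*} [Fintype n] [DecidableEq n] (M : Matrix n n ℝ) (x : ℝ) :
    (M.charpoly).eval x = (x • (1 : Matrix n n ℝ) - M).det := by
  have : (evalRingHom x) M.charmatrix.det = ((evalRingHom x).mapMatrix M.charmatrix).det :=
    (RingHom.map_det _ _)
  rw [Matrix.charpoly]
  show (evalRingHom x) M.charmatrix.det = _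
  rw [this]
  congr 1
  ext i j
  by_cases h : i = j <;>
    simp [h, Matrix.charmatrix_apply, Matrix.one_apply, Matrix.diagonal_apply]

lemma charpoly_eq_prod' {n : Type*} [Fintype n] [DecidableEq n] {M : Matrix n n ℝ}
    (hM : M.IsHermitian) : M.charpoly = ∏ i, (X - C (hM.eigenvalues i)) := by
  apply Polynomial.funext
  intro x
  rw [eval_charpoly']
  have hU := hM.spectral_theorem
  simp only [Unitary.conjStarAlgAut_apply, Unitary.coe_star] at hU
  set U : Matrix n n ℝ := (hM.eigenvectorUnitary : Matrix n n ℝ) with hUdef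
  have h1 : U * star U = 1 := (Matrix.mem_unitaryGroup_iff).mp hM.eigenvectorUnitary.2
  have hsub : x • (1 : Matrix n n ℝ) - M
      = U * (x • (1 : Matrix n n ℝ) - diagonal (RCLike.ofReal ∘ hM.eigenvalues)) * star U := by
    rw [Matrix.mul_sub, Matrix.sub_mul, Matrix.mul_smul, Matrix.mul_one, Matrix.smul_mul, h1,
      Matrix.mul_assoc, ← Matrix.mul_assoc, ← hU]
  rw [hsub, Matrix.det_mul, Matrix.det_mul, mul_comm (U.det) _, mul_assoc, ← Matrix.det_mul, h1]
  have : x • (1 : Matrix n n ℝ) - diagonal (RCLike.ofReal ∘ hM.eigenvalues)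
      = diagonal (fun i => x - hM.eigenvalues i) := by
    ext i j
    by_cases h : i = j <;> simp [h, Matrix.one_apply, Matrix.diagonal_apply]
  rw [this, Matrix.det_diagonal]
  simp [eval_prod]

lemma key_det {ι κ : Type*} [Fintype ι] [Fintype κ] [DecidableEq ι] [DecidableEq κ]
    (B : Matrix ι κ ℝ) (x : ℝ) (hx : x ≠ 0) :
    x ^ (Fintype.card ι) * (x • (1 : Matrix (ι ⊕ κ) (ι ⊕ κ) ℝ) - fromBlocks 0 B Bᵀ 0).det
      = x ^ (Fintype.card κ) * ((x ^ 2) • (1 : Matrix ι ι ℝ) - B * Bᵀ).det := by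
  have hblock : x • (1 : Matrix (ι ⊕ κ) (ι ⊕ κ) ℝ) - fromBlocks 0 B Bᵀ 0
      = fromBlocks (x • (1 : Matrix ι ι ℝ)) (-B) (-Bᵀ) (x • (1 : Matrix κ κ ℝ)) := by
    ext (i|i) (j|j) <;> simp [Matrix.one_apply]
  letI : Invertible (x • (1 : Matrix κ κ ℝ)) :=
    ⟨x⁻¹ • (1 : Matrix κ κ ℝ), by simp [smul_smul, inv_mul_cancel₀ hx, mul_inv_cancel₀ hx],
      by simp [smul_smul, inv_mul_cancel₀ hx, mul_inv_cancel₀ hx]⟩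
  have hinv : ⅟(x • (1 : Matrix κ κ ℝ)) = x⁻¹ • (1 : Matrix κ κ ℝ) := rfl
  rw [hblock, Matrix.det_fromBlocks₂₂, hinv]
  have h1 : (-B) * (x⁻¹ • (1 : Matrix κ κ ℝ)) * (-Bᵀ) = x⁻¹ • (B * Bᵀ) := by
    simp [Matrix.mul_smul, Matrix.smul_mul]
  have h2 : (x • (1 : Matrix κ κ ℝ)).det = x ^ (Fintype.card κ) := by
    simp [Matrix.det_smul]
  rw [h1, h2]
  have h3 : x ^ (Fintype.card ι) * (x • (1 : Matrix ι ι ℝ) - x⁻¹ • (B * Bᵀ)).det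
      = ((x ^ 2) • (1 : Matrix ι ι ℝ) - B * Bᵀ).det := by
    rw [← Matrix.det_smul, smul_sub, smul_smul, smul_smul, mul_inv_cancel₀ hx, one_smul, ← sq]
  rw [← h3]; ring

lemma charpoly_fromBlocks {ι κ : Type*} [Fintype ι] [Fintype κ] [DecidableEq ι] [DecidableEq κ]
    (B : Matrix ι κ ℝ) :
    X ^ (Fintype.card ι) * (fromBlocks 0 B Bᵀ 0).charpoly
      = X ^ (Fintype.card κ) * ((B * Bᵀ).charpoly.comp (X ^ 2)) := by
  apply Polynomial.eq_of_infinite_eval_eq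
  apply Set.Infinite.mono (s := {x : ℝ | x ≠ 0})
  · intro x hx
    have hx' : x ≠ 0 := hx
    simp only [Set.mem_setOf_eq, eval_mul, eval_pow, eval_X, eval_comp, eval_charpoly']
    exact key_det B x hx'
  · have h0 : {x : ℝ | x ≠ 0} = ({0} : Set ℝ)ᶜ := by ext x; simp
    rw [h0]
    exact (Set.finite_singleton 0).infinite_compl

lemma charpoly_shift {n : Type*} [Fintype n] [DecidableEq n] (M : Matrix n n ℝ) (c : ℝ) :
    (M + c • (1 : Matrix n n ℝ)).charpoly = M.charpoly.comp (X - C c) := by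
  apply Polynomial.funext
  intro x
  rw [eval_comp, eval_charpoly', eval_charpoly']
  simp only [eval_sub, eval_X, eval_C]
  congr 1
  rw [sub_smul]
  abel

lemma prod_comp' (t : Multiset ℝ) (p : ℝ[X]) :
    ((t.map fun a => X - C a).prod).comp p = (t.map fun a => p - C a).prod := by
  have h := map_multiset_prod (Polynomial.aeval p : ℝ[X] →ₐ[ℝ] ℝ[X]) (t.map fun a => X - C a)
  have h2 : (Polynomial.aeval p : ℝ[X] →ₐ[ℝ] ℝ[X]) (t.map fun a => X - C a).prod
      = ((t.map fun a => X - C a).prod).comp p := rfl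
  rw [h2] at h
  rw [h, Multiset.map_map]
  congr 1
  apply Multiset.map_congr rfl
  intro a _
  show (Polynomial.aeval p) (X - C a) = p - C a
  simp

lemma sq_factor (a : ℝ) (ha : 0 ≤ a) :
    (X ^ 2 - C a : ℝ[X]) = (X - C (Real.sqrt a)) * (X - C (-Real.sqrt a)) := by
  have hs : Real.sqrt a ^ 2 = a := Real.sq_sqrt ha
  calc (X ^ 2 - C a : ℝ[X]) = X ^ 2 - C (Real.sqrt a ^ 2) := by rw [hs]
    _ = X ^ 2 - (C (Real.sqrt a)) ^ 2 := by rw [map_pow]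
    _ = (X - C (Real.sqrt a)) * (X - C (-Real.sqrt a)) := by rw [map_neg]; ring

lemma prod_comp_sq_factor (t : Multiset ℝ) (c : ℝ) (h : ∀ a ∈ t, 0 ≤ a + c) :
    ((t.map fun a => X - C a).prod).comp (X ^ 2 - C c)
      = ((t.map (fun a => Real.sqrt (a + c)) + t.map (fun a => -Real.sqrt (a + c))).map
          fun a => X - C a).prod := by
  rw [prod_comp']
  have h1 : t.map (fun a => X ^ 2 - C c - C a)
      = t.map (fun a => (X - C (Real.sqrt (a + c))) * (X - C (-Real.sqrt (a + c)))) := by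
    apply Multiset.map_congr rfl
    intro a ha
    rw [sub_sub, ← map_add, add_comm c a, sq_factor (a + c) (h a ha)]
  rw [h1, Multiset.prod_map_mul, Multiset.map_add, Multiset.prod_add,
    Multiset.map_map, Multiset.map_map]
  rfl

lemma roots_comp_sq (t : Multiset ℝ) (c : ℝ) (h : ∀ a ∈ t, 0 ≤ a + c) :
    (((t.map fun a => X - C a).prod).comp (X ^ 2 - C c)).roots
      = t.map (fun a => Real.sqrt (a + c)) + t.map (fun a => -Real.sqrt (a + c)) := by
  rw [prod_comp_sq_factor t c h, roots_multiset_prod_X_sub_C]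

/-! ### Main theorem -/

/-- Characteristic polynomial of the adjacency matrix of a graph. -/
noncomputable def gCharpoly {V : Type*} [Fintype V] (G : SimpleGraph V) : Polynomial ℝ :=
  letI := Classical.decEq V
  letI := Classical.decRel G.Adj
  (G.adjMatrix ℝ).charpoly

/-- Adjacency eigenvalues listed in non-increasing order (with multiplicity). -/
noncomputable def eigsDesc {V : Type*} [Fintype V] (G : SimpleGraph V) : List ℝ :=
  ((gCharpoly G).roots.sort (· ≤ ·)).reverse

/-- Number of adjacency eigenvalues in the open interval (-1, 1), with multiplicity. -/
noncomputable def numIn {V : Type*} [Fintype V] (G : SimpleGraph V) : ℕ :=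
  ((gCharpoly G).roots.filter (fun x => -1 < x ∧ x < 1)).card

/-- Multiplicity of `lam` as an adjacency eigenvalue. -/
noncomputable def multOf {V : Type*} [Fintype V] (G : SimpleGraph V) (lam : ℝ) : ℕ :=
  (gCharpoly G).roots.count lam

/-- Nullity: dimension of the kernel of the adjacency matrix. -/
noncomputable def gNullity {V : Type*} [Fintype V] (G : SimpleGraph V) : ℕ :=
  letI := Classical.decRel G.Adj
  Module.finrank ℝ (LinearMap.ker (G.adjMatrix ℝ).mulVecLin)

/-- The graph obtained from `G` by joining each vertex of `V₁` to `r` new pendant vertices. -/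
def attachPendants {V : Type*} (G : SimpleGraph V) (V₁ : Set V) (r : ℕ) :
    SimpleGraph (V ⊕ (V₁ × Fin r)) :=
  SimpleGraph.fromRel (fun x y =>
    match x, y with
    | Sum.inl a, Sum.inl b => G.Adj a b
    | Sum.inl a, Sum.inr p => a = (p.1 : V)
    | _, _ => False)

theorem stmt10 {V : Type*} [Fintype V] (G : SimpleGraph V) (V₁ : Set V)
    (hbip : ∀ a b, G.Adj a b → (a ∈ V₁ ↔ b ∉ V₁))
    (r : ℕ) (hr : 0 < r)
    (k : ℕ) (hk : k = ((gCharpoly G).roots.filter (fun x => 0 < x)).card)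
    (i : ℕ) (hi : i < k) :
    ((eigsDesc (attachPendants G V₁ r)).getD i 0) ^ 2 = ((eigsDesc G).getD i 0) ^ 2 + r := by
  classical
  set B : Matrix ↥V₁ ↥(V₁ᶜ : Set V) ℝ := Matrix.of fun a b => if G.Adj ↑a ↑b then 1 else 0 with hB
  set Cm : Matrix ↥V₁ (↥V₁ × Fin r) ℝ := Matrix.of fun a p => if a = p.1 then 1 else 0 with hCm
  set E : Matrix ↥V₁ (↥(V₁ᶜ : Set V) ⊕ (↥V₁ × Fin r)) ℝ := B.fromCols Cm with hE
  set e₁ : (↥V₁ ⊕ ↥(V₁ᶜ : Set V)) ≃ V := Equiv.Set.sumCompl V₁ with he₁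
  -- the adjacency matrix of G in block form
  have hG : gCharpoly G = (fromBlocks 0 B Bᵀ 0).charpoly := by
    unfold gCharpoly
    rw [← Matrix.charpoly_reindex e₁.symm]
    congr 1
    ext x y
    rcases x with a | a <;> rcases y with b | b <;>
      simp only [Matrix.reindex_apply, Matrix.submatrix_apply, Equiv.symm_symm, he₁,
        Equiv.Set.sumCompl_apply_inl, Equiv.Set.sumCompl_apply_inr,
        Matrix.fromBlocks_apply₁₁, Matrix.fromBlocks_apply₁₂,
        Matrix.fromBlocks_apply₂₁, Matrix.fromBlocks_apply₂₂]
    · have hnot : ¬ G.Adj ↑a ↑b := fun h => ((hbip _ _ h).mp a.2) b.2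
      simp [hnot]
    · by_cases h : G.Adj ↑a ↑b <;> simp [hB, h]
    · by_cases h : G.Adj ↑a ↑b
      · have h' : G.Adj ↑b ↑a := h.symm
        simp [hB, h, h']
      · have h' : ¬ G.Adj ↑b ↑a := fun hh => h hh.symm
        simp [hB, h, h']
    · have hnot : ¬ G.Adj ↑a ↑b := fun h => a.2 ((hbip _ _ h).mpr b.2)
      simp [hnot]
    -- adjacency facts for the pendant graph
  have hA1 : ∀ (u v : V), (attachPendants G V₁ r).Adj (Sum.inl u) (Sum.inl v) ↔ G.Adj u v := by
    intro u v
    simp only [attachPendants, SimpleGraph.fromRel_adj]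
    constructor
    · rintro ⟨hne, h | h⟩
      · exact h
      · exact h.symm
    · intro h
      exact ⟨by simpa using h.ne, Or.inl h⟩
  have hA2 : ∀ (u : V) (p : ↥V₁ × Fin r),
      (attachPendants G V₁ r).Adj (Sum.inl u) (Sum.inr p) ↔ u = ↑p.1 := by
    intro u p
    simp [attachPendants, SimpleGraph.fromRel_adj]
  have hA2' : ∀ (u : V) (p : ↥V₁ × Fin r),
      (attachPendants G V₁ r).Adj (Sum.inr p) (Sum.inl u) ↔ u = ↑p.1 := by
    intro u p
    rw [SimpleGraph.adj_comm]
    exact hA2 u p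
  have hA3 : ∀ (p q : ↥V₁ × Fin r),
      ¬ (attachPendants G V₁ r).Adj (Sum.inr p) (Sum.inr q) := by
    intro p q
    simp [attachPendants, SimpleGraph.fromRel_adj]
  set e₂ : (↥V₁ ⊕ (↥(V₁ᶜ : Set V) ⊕ (↥V₁ × Fin r))) ≃ (V ⊕ (↥V₁ × Fin r)) :=
    (Equiv.sumAssoc _ _ _).symm.trans (e₁.sumCongr (Equiv.refl _)) with he₂
  have he2a : ∀ a : ↥V₁, e₂ (Sum.inl a) = Sum.inl (a : V) := fun a => rfl
  have he2b : ∀ b : ↥(V₁ᶜ : Set V), e₂ (Sum.inr (Sum.inl b)) = Sum.inl (b : V) := fun b => rfl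
  have he2p : ∀ p : ↥V₁ × Fin r, e₂ (Sum.inr (Sum.inr p)) = Sum.inr p := fun p => rfl
  have hG' : gCharpoly (attachPendants G V₁ r) = (fromBlocks 0 E Eᵀ 0).charpoly := by
    unfold gCharpoly
    have hre := @Matrix.charpoly_reindex ℝ _ _ _ (Classical.decEq _) (Classical.decEq _) _ _
      e₂.symm ((attachPendants G V₁ r).adjMatrix ℝ)
    rw [← hre]
    have hsub : ∀ (i1 i2 : DecidableEq (↥V₁ ⊕ (↥(V₁ᶜ : Set V) ⊕ (↥V₁ × Fin r))))
        (M1 M2 : Matrix (↥V₁ ⊕ (↥(V₁ᶜ : Set V) ⊕ (↥V₁ × Fin r)))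
          (↥V₁ ⊕ (↥(V₁ᶜ : Set V) ⊕ (↥V₁ × Fin r))) ℝ), M1 = M2 →
        @Matrix.charpoly ℝ _ _ i1 _ M1 = @Matrix.charpoly ℝ _ _ i2 _ M2 := by
      intro i1 i2 M1 M2 h
      cases Subsingleton.elim i1 i2
      rw [h]
    apply hsub
    ext x y
    rcases x with a | b | p <;> rcases y with a' | b' | q <;>
      simp only [Matrix.reindex_apply, Matrix.submatrix_apply, Equiv.symm_symm,
        he2a, he2b, he2p, Matrix.fromBlocks_apply₁₁, Matrix.fromBlocks_apply₁₂,
        Matrix.fromBlocks_apply₂₁, Matrix.fromBlocks_apply₂₂]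
    · -- V₁ vs V₁
      have hnot : ¬ G.Adj ↑a ↑a' := fun h => ((hbip _ _ h).mp a.2) a'.2
      simp [SimpleGraph.adjMatrix_apply, hA1, hnot]
    · -- V₁ vs V₂
      by_cases h : G.Adj ↑a ↑b' <;>
        simp [SimpleGraph.adjMatrix_apply, hA1, hE, hB, Matrix.fromCols, h]
    · -- V₁ vs pendant
      by_cases h : a = q.1
      · simp [SimpleGraph.adjMatrix_apply, hA2, hE, hCm, Matrix.fromCols, h]
      · have h' : ¬((a : V) = ↑q.1) := fun hh => h (Subtype.ext hh)
        simp [SimpleGraph.adjMatrix_apply, hA2, hE, hCm, Matrix.fromCols, h, h']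
    · -- V₂ vs V₁
      by_cases h : G.Adj ↑a' ↑b
      · have h' : G.Adj ↑b ↑a' := h.symm
        simp [SimpleGraph.adjMatrix_apply, hA1, hE, hB, Matrix.fromCols, h, h']
      · have h' : ¬ G.Adj ↑b ↑a' := fun hh => h hh.symm
        simp [SimpleGraph.adjMatrix_apply, hA1, hE, hB, Matrix.fromCols, h, h']
    · -- V₂ vs V₂
      have hnot : ¬ G.Adj ↑b ↑b' := fun h => b.2 ((hbip _ _ h).mpr b'.2)
      simp [SimpleGraph.adjMatrix_apply, hA1, hnot]
    · -- V₂ vs pendant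
      have hnot : ¬((b : V) = ↑q.1) := fun h => b.2 (h ▸ q.1.2)
      simp [SimpleGraph.adjMatrix_apply, hA2, hnot]
    · -- pendant vs V₁
      by_cases h : a' = p.1
      · simp [SimpleGraph.adjMatrix_apply, hA2', hE, hCm, Matrix.fromCols, h]
      · have h' : ¬((a' : V) = ↑p.1) := fun hh => h (Subtype.ext hh)
        simp [SimpleGraph.adjMatrix_apply, hA2', hE, hCm, Matrix.fromCols, h, h']
    · -- pendant vs V₂
      have hnot : ¬((b' : V) = ↑p.1) := fun h => b'.2 (h ▸ p.1.2)
      simp [SimpleGraph.adjMatrix_apply, hA2', hnot]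
    · -- pendant vs pendant
      simp [SimpleGraph.adjMatrix_apply, hA3]
    -- the pendant block contributes r • 1
  have hCC : Cm * Cmᵀ = (r : ℝ) • (1 : Matrix ↥V₁ ↥V₁ ℝ) := by
    ext a b
    have h1 : (Cm * Cmᵀ) a b
        = ∑ c : ↥V₁, (r : ℝ) * ((if a = c then (1:ℝ) else 0) * (if b = c then 1 else 0)) := by
      rw [Matrix.mul_apply, Fintype.sum_prod_type]
      apply Finset.sum_congr rfl
      intro c _
      have hterm0 : ∀ j : Fin r, Cm a (c, j) * Cmᵀ (c, j) b
          = (if a = c then (1:ℝ) else 0) * (if b = c then 1 else 0) := fun j => by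
        simp [hCm]
      rw [Finset.sum_congr rfl fun j _ => hterm0 j, Finset.sum_const, Finset.card_univ,
        Fintype.card_fin, nsmul_eq_mul]
    have h2 : ∑ c : ↥V₁, ((if a = c then (1:ℝ) else 0) * (if b = c then 1 else 0))
        = if a = b then 1 else 0 := by
      by_cases h : a = b
      · subst h
        have hterm : ∀ c : ↥V₁, (if a = c then (1:ℝ) else 0) * (if a = c then 1 else 0)
            = if a = c then (1:ℝ) else 0 := fun c => by by_cases hc : a = c <;> simp [hc]
        rw [Finset.sum_congr rfl fun c _ => hterm c]
        simp [Finset.sum_ite_eq]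
      · have hterm : ∀ c : ↥V₁, (if a = c then (1:ℝ) else 0) * (if b = c then 1 else 0) = 0 := by
          intro c
          by_cases hc : a = c
          · have hbc : ¬ b = c := fun hh => h (hc.trans hh.symm)
            simp [hc, hbc]
          · simp [hc]
        rw [Finset.sum_congr rfl fun c _ => hterm c]
        simp [h]
    rw [h1, ← Finset.mul_sum, h2]
    simp [Matrix.smul_apply, Matrix.one_apply]
  have hEE : E * Eᵀ = B * Bᵀ + (r : ℝ) • 1 := by
    rw [hE, Matrix.transpose_fromCols, Matrix.fromCols_mul_fromRows, hCC]
  -- spectral data of B * Bᵀ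
  have hPSD : (B * Bᵀ).PosSemidef := by
    have h := Matrix.posSemidef_self_mul_conjTranspose B
    rwa [Matrix.conjTranspose_eq_transpose_of_trivial] at h
  obtain ⟨Sm, hSm⟩ : ∃ s : Multiset ℝ, s = Finset.univ.val.map hPSD.1.eigenvalues := ⟨_, rfl⟩
  have hSnn : ∀ a ∈ Sm, 0 ≤ a := by
    intro a ha
    rw [hSm] at ha
    obtain ⟨j, -, rfl⟩ := Multiset.mem_map.mp ha
    exact hPSD.eigenvalues_nonneg j
  have hq : (B * Bᵀ).charpoly = (Sm.map fun a => X - C a).prod := by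
    rw [charpoly_eq_prod' hPSD.1, Finset.prod_eq_multiset_prod, hSm, Multiset.map_map]
    rfl
  have hprodne : ∀ (t : Multiset ℝ), (t.map fun a => X - C a).prod ≠ (0 : ℝ[X]) := by
    intro t
    apply Multiset.prod_ne_zero
    rw [Multiset.mem_map]
    rintro ⟨a, -, ha⟩
    exact Polynomial.X_sub_C_ne_zero a ha
  have hsqz : (fun a : ℝ => Real.sqrt (a + 0)) = Real.sqrt := by
    funext a; rw [add_zero]
  have hsqz' : (fun a : ℝ => -Real.sqrt (a + 0)) = fun a => -Real.sqrt a := by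
    funext a; rw [add_zero]
  -- roots of G
  have hroots1 : (Fintype.card ↥V₁) • ({0} : Multiset ℝ) + (gCharpoly G).roots
      = (Fintype.card ↥(V₁ᶜ : Set V)) • ({0} : Multiset ℝ)
        + (Sm.map Real.sqrt + Sm.map fun a => -Real.sqrt a) := by
    have hX20 : (X ^ 2 : ℝ[X]) = X ^ 2 - C 0 := by simp
    have hpoly1 : X ^ (Fintype.card ↥V₁) * gCharpoly G
        = X ^ (Fintype.card ↥(V₁ᶜ : Set V))
          * (((Sm.map fun a => X - C a).prod).comp (X ^ 2 - C 0)) := by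
      rw [hG, charpoly_fromBlocks B, hq, ← hX20]
    have h0 : ∀ a ∈ Sm, 0 ≤ a + 0 := fun a ha => by simpa using hSnn a ha
    have hL := congrArg Polynomial.roots hpoly1
    rw [Polynomial.roots_mul, Polynomial.roots_mul, Polynomial.roots_X_pow,
      Polynomial.roots_X_pow, roots_comp_sq _ _ h0, hsqz, hsqz'] at hL
    · exact hL
    · rw [prod_comp_sq_factor _ _ h0]
      exact mul_ne_zero (pow_ne_zero _ Polynomial.X_ne_zero) (hprodne _)
    · rw [hG]
      exact mul_ne_zero (pow_ne_zero _ Polynomial.X_ne_zero)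
        (Matrix.charpoly_monic _).ne_zero
  -- roots of G'
  have hrpos : (0 : ℝ) < r := by exact_mod_cast hr
  have hroots2 : (Fintype.card ↥V₁) • ({0} : Multiset ℝ)
        + (gCharpoly (attachPendants G V₁ r)).roots
      = (Fintype.card (↥(V₁ᶜ : Set V) ⊕ ↥V₁ × Fin r)) • ({0} : Multiset ℝ)
        + (Sm.map (fun a => Real.sqrt (a + r)) + Sm.map fun a => -Real.sqrt (a + r)) := by
    have hcompr : ((X : ℝ[X]) - C (r : ℝ)).comp (X ^ 2) = X ^ 2 - C (r : ℝ) := by simp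
    have hpoly2 : X ^ (Fintype.card ↥V₁) * gCharpoly (attachPendants G V₁ r)
        = X ^ (Fintype.card (↥(V₁ᶜ : Set V) ⊕ ↥V₁ × Fin r))
          * (((Sm.map fun a => X - C a).prod).comp (X ^ 2 - C (r : ℝ))) := by
      rw [hG', charpoly_fromBlocks E, hEE, charpoly_shift, hq, Polynomial.comp_assoc, hcompr]
    have h0 : ∀ a ∈ Sm, 0 ≤ a + (r : ℝ) := fun a ha => by
      have := hSnn a ha; linarith
    have hL := congrArg Polynomial.roots hpoly2
    rw [Polynomial.roots_mul, Polynomial.roots_mul, Polynomial.roots_X_pow,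
      Polynomial.roots_X_pow, roots_comp_sq _ _ h0] at hL
    · exact hL
    · rw [prod_comp_sq_factor _ _ h0]
      exact mul_ne_zero (pow_ne_zero _ Polynomial.X_ne_zero) (hprodne _)
    · rw [hG']
      exact mul_ne_zero (pow_ne_zero _ Polynomial.X_ne_zero)
        (Matrix.charpoly_monic _).ne_zero
  -- positive parts
  have hzero_filter : ∀ n : ℕ,
      (n • ({0} : Multiset ℝ)).filter (fun x => (0 : ℝ) < x) = 0 := by
    intro n
    rw [Multiset.nsmul_singleton, Multiset.filter_eq_nil]
    intro a ha
    rw [Multiset.eq_of_mem_replicate ha]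
    exact lt_irrefl 0
  have hpos1 : (gCharpoly G).roots.filter (fun x => 0 < x)
      = (Sm.filter fun a => 0 < a).map Real.sqrt := by
    have h := congrArg (Multiset.filter (fun x => (0 : ℝ) < x)) hroots1
    rw [Multiset.filter_add, Multiset.filter_add, Multiset.filter_add, hzero_filter,
      hzero_filter, Multiset.filter_map, Multiset.filter_map] at h
    rw [zero_add, zero_add] at h
    have hneg : Multiset.filter ((fun x => (0:ℝ) < x) ∘ fun a => -Real.sqrt a) Sm = 0 := by
      rw [Multiset.filter_eq_nil]
      intro a _
      simp only [Function.comp_apply, not_lt]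
      exact neg_nonpos.mpr (Real.sqrt_nonneg a)
    rw [hneg, Multiset.map_zero, add_zero] at h
    rw [h]
    congr 1
    apply Multiset.filter_congr
    intro a ha
    simp only [Function.comp_apply]
    constructor
    · intro h'
      exact (Real.sqrt_pos.mp h')
    · intro h'
      exact Real.sqrt_pos.mpr h'
  have hpos2 : (gCharpoly (attachPendants G V₁ r)).roots.filter (fun x => 0 < x)
      = Sm.map (fun a => Real.sqrt (a + r)) := by
    have h := congrArg (Multiset.filter (fun x => (0 : ℝ) < x)) hroots2
    rw [Multiset.filter_add, Multiset.filter_add, Multiset.filter_add, hzero_filter,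
      hzero_filter, Multiset.filter_map, Multiset.filter_map] at h
    rw [zero_add, zero_add] at h
    have hneg : Multiset.filter ((fun x => (0:ℝ) < x) ∘ fun a => -Real.sqrt (a + r)) Sm = 0 := by
      rw [Multiset.filter_eq_nil]
      intro a _
      simp only [Function.comp_apply, not_lt]
      exact neg_nonpos.mpr (Real.sqrt_nonneg _)
    rw [hneg, Multiset.map_zero, add_zero] at h
    have hall : Multiset.filter ((fun x => (0:ℝ) < x) ∘ fun a => Real.sqrt (a + r)) Sm = Sm := by
      rw [Multiset.filter_eq_self]
      intro a ha
      simp only [Function.comp_apply]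
      refine Real.sqrt_pos.mpr ?_
      have := hSnn a ha
      linarith
    rw [hall] at h
    exact h
  -- cardinalities
  have hkcard : k = Multiset.card (Sm.filter fun a => 0 < a) := by
    rw [hk, hpos1, Multiset.card_map]
  have hk_le : k ≤ Multiset.card Sm :=
    hkcard ▸ Multiset.card_le_card (Multiset.filter_le _ _)
  -- monotone functions
  have gmono : Monotone (fun a : ℝ => Real.sqrt (a + r)) := fun a b hab =>
    Real.sqrt_le_sqrt (by linarith)
  have sqrtmono : Monotone Real.sqrt := fun a b hab => Real.sqrt_le_sqrt hab
  -- the i-th largest values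
  have cross : ∀ (R : Multiset ℝ), ∀ a ∈ R.filter (fun x => ¬ (0:ℝ) < x),
      ∀ b ∈ R.filter (fun x => (0:ℝ) < x), a ≤ b := by
    intro R a ha b hb
    have h1 : ¬ (0:ℝ) < a := (Multiset.mem_filter.mp ha).2
    have h2 : (0:ℝ) < b := (Multiset.mem_filter.mp hb).2
    exact le_of_lt (lt_of_le_of_lt (not_lt.mp h1) h2)
  have crossS : ∀ a ∈ Sm.filter (fun x => ¬ (0:ℝ) < x),
      ∀ b ∈ Sm.filter (fun x => (0:ℝ) < x), a ≤ b := cross Sm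
  have hnth_S : nthD Sm i = nthD (Sm.filter fun a => 0 < a) i := by
    conv_lhs => rw [← Multiset.filter_add_not (fun x => (0:ℝ) < x) Sm]
    exact nthD_add_of _ _ crossS i (by rw [← hkcard]; exact hi)
  have e1 : nthD (gCharpoly (attachPendants G V₁ r)).roots i
      = Real.sqrt ((nthD (Sm.filter fun a => 0 < a) i) + r) := by
    conv_lhs => rw [← Multiset.filter_add_not (fun x => (0:ℝ) < x)
      (gCharpoly (attachPendants G V₁ r)).roots]
    rw [nthD_add_of _ _ (cross _) i
      (by rw [hpos2, Multiset.card_map]; exact lt_of_lt_of_le hi hk_le), hpos2,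
      nthD_map_mono _ gmono _ _ (lt_of_lt_of_le hi hk_le), hnth_S]
  have e2 : nthD (gCharpoly G).roots i
      = Real.sqrt (nthD (Sm.filter fun a => 0 < a) i) := by
    conv_lhs => rw [← Multiset.filter_add_not (fun x => (0:ℝ) < x) (gCharpoly G).roots]
    rw [nthD_add_of _ _ (cross _) i (by rw [← hk]; exact hi), hpos1,
      nthD_map_mono _ sqrtmono _ _ (by rw [← hkcard]; exact hi)]
  have hs_mem : nthD (Sm.filter fun a => 0 < a) i ∈ Sm.filter fun a => 0 < a :=
    nthD_mem _ _ (by rw [← hkcard]; exact hi)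
  have hs0 : (0:ℝ) < nthD (Sm.filter fun a => 0 < a) i := (Multiset.mem_filter.mp hs_mem).2
  show (nthD (gCharpoly (attachPendants G V₁ r)).roots i) ^ 2
      = (nthD (gCharpoly G).roots i) ^ 2 + r
  rw [e1, e2, Real.sq_sqrt (by linarith), Real.sq_sqrt hs0.le]
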